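/- Suppose ℓ₁ ≤ ℓ₂ are positive integers and p ∈ (0,1). Let H(Bin(ℓ,p)) denote the Shannon entropy of the Binomial(ℓ,p) distribution. Then H(Bin(ℓ₂,p)) - H(Bin(ℓ₂ - 1, p)) ≤ H(Bin(ℓ₁,p)) - H(Bin(ℓ₁ - 1, p)); i.e., the entropy increments of binomial distributions are nonincreasing in ℓ. -/

import Mathlib

open Finset Real

noncomputable def binPMF (ℓ : ℕ) (p : ℝ) (i : ℕ) : ℝ :=
  (Nat.choose ℓ i : ℝ) * p ^ i * (1 - p) ^ (ℓ - i)

/-- Shannon entropy (base 2) of the `Bin(ℓ,p)` distribution. -/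
noncomputable def binH (ℓ : ℕ) (p : ℝ) : ℝ :=
  -∑ i ∈ Finset.range (ℓ + 1), binPMF ℓ p i * Real.logb 2 (binPMF ℓ p i)

noncomputable def stp (p : ℝ) (q : ℕ → ℝ) : ℕ → ℝ
  | 0 => (1 - p) * q 0
  | (k+1) => (1 - p) * q (k+1) + p * q k

@[simp] lemma stp_zero (p : ℝ) (q : ℕ → ℝ) : stp p q 0 = (1-p) * q 0 := rfl
@[simp] lemma stp_succ (p : ℝ) (q : ℕ → ℝ) (k : ℕ) :
    stp p q (k+1) = (1-p) * q (k+1) + p * q k := rfl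

noncomputable def ent (q : ℕ → ℝ) (N : ℕ) : ℝ :=
  -∑ i ∈ Finset.range N, q i * Real.log (q i)

noncomputable def Ff (p : ℝ) (q : ℕ → ℝ) (k : ℕ) : ℝ :=
  (1-p) * q k * Real.log (stp p q k / ((1-p) * q k)) +
  p * q k * Real.log (stp p q (k+1) / (p * q k))

noncomputable def Gf (p : ℝ) (q : ℕ → ℝ) (N : ℕ) : ℝ :=
  ∑ k ∈ Finset.range N, Ff p q k

lemma logsum2 (a₁ a₂ b₁ b₂ : ℝ) (ha₁ : 0 ≤ a₁) (ha₂ : 0 ≤ a₂) (hb₁ : 0 ≤ b₁) (hb₂ : 0 ≤ b₂)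
    (h1 : a₁ ≠ 0 → b₁ ≠ 0) (h2 : a₂ ≠ 0 → b₂ ≠ 0) :
    a₁ * Real.log (b₁ / a₁) + a₂ * Real.log (b₂ / a₂)
      ≤ (a₁ + a₂) * Real.log ((b₁ + b₂) / (a₁ + a₂)) := by
  rcases eq_or_lt_of_le ha₁ with h1' | h1' <;> rcases eq_or_lt_of_le ha₂ with h2' | h2'
  · simp [← h1', ← h2']
  · -- a₁ = 0, a₂ > 0
    have hb₂' : 0 < b₂ := lt_of_le_of_ne hb₂ (Ne.symm (h2 (ne_of_gt h2')))
    rw [← h1', zero_mul, zero_add, zero_add]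
    have : Real.log (b₂ / a₂) ≤ Real.log ((b₁ + b₂) / a₂) := by
      apply Real.log_le_log (by positivity)
      gcongr
      linarith
    exact mul_le_mul_of_nonneg_left this h2'.le
  · -- a₁ > 0, a₂ = 0
    have hb₁' : 0 < b₁ := lt_of_le_of_ne hb₁ (Ne.symm (h1 (ne_of_gt h1')))
    rw [← h2', zero_mul, add_zero, add_zero]
    have : Real.log (b₁ / a₁) ≤ Real.log ((b₁ + b₂) / a₁) := by
      apply Real.log_le_log (by positivity)
      gcongr
      linarith
    exact mul_le_mul_of_nonneg_left this h1'.le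
  · -- both positive
    have hb₁' : 0 < b₁ := lt_of_le_of_ne hb₁ (Ne.symm (h1 (ne_of_gt h1')))
    have hb₂' : 0 < b₂ := lt_of_le_of_ne hb₂ (Ne.symm (h2 (ne_of_gt h2')))
    have hs : 0 < a₁ + a₂ := by linarith
    have hbs : 0 < b₁ + b₂ := by linarith
    have key : ∀ a b : ℝ, 0 < a → 0 < b →
        a * Real.log (b / a) ≤ a * Real.log ((b₁ + b₂) / (a₁ + a₂)) + (b * (a₁+a₂) / (b₁+b₂) - a) := by
      intro a b ha hb
      have hr : (0:ℝ) < b * (a₁+a₂) / (a * (b₁+b₂)) := by positivity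
      have hlog := Real.log_le_sub_one_of_pos hr
      have e : Real.log (b * (a₁+a₂) / (a * (b₁+b₂)))
          = Real.log (b / a) - Real.log ((b₁ + b₂) / (a₁ + a₂)) := by
        rw [Real.log_div (by positivity) (by positivity),
            Real.log_div (ne_of_gt hb) (ne_of_gt ha),
            Real.log_div (ne_of_gt hbs) (ne_of_gt hs),
            Real.log_mul (ne_of_gt hb) (ne_of_gt hs),
            Real.log_mul (ne_of_gt ha) (ne_of_gt hbs)]
        ring
      rw [e] at hlog
      have h2 : Real.log (b / a) ≤ Real.log ((b₁ + b₂) / (a₁ + a₂)) + (b * (a₁+a₂) / (a * (b₁+b₂)) - 1) := by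
        linarith
      have h3 := mul_le_mul_of_nonneg_left h2 ha.le
      have e2 : a * (Real.log ((b₁ + b₂) / (a₁ + a₂)) + (b * (a₁+a₂) / (a * (b₁+b₂)) - 1))
          = a * Real.log ((b₁ + b₂) / (a₁ + a₂)) + (b * (a₁+a₂) / (b₁+b₂) - a) := by
        field_simp
      linarith [e2 ▸ h3]
    have k1 := key a₁ b₁ h1' hb₁'
    have k2 := key a₂ b₂ h2' hb₂'
    have e3 : b₁ * (a₁+a₂) / (b₁+b₂) + b₂ * (a₁+a₂) / (b₁+b₂) = a₁ + a₂ := by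
      field_simp
    have : (a₁ + a₂) * Real.log ((b₁ + b₂) / (a₁ + a₂))
        = a₁ * Real.log ((b₁ + b₂) / (a₁ + a₂)) + a₂ * Real.log ((b₁ + b₂) / (a₁ + a₂)) := by ring
    linarith

section
variable {p : ℝ} {q : ℕ → ℝ} {N : ℕ}

lemma stp_nonneg (hp0 : 0 < p) (hp1 : p < 1) (hq : ∀ i, 0 ≤ q i) (i : ℕ) : 0 ≤ stp p q i := by
  have h1p : (0:ℝ) ≤ 1 - p := by linarith
  match i with
  | 0 => exact mul_nonneg h1p (hq 0)
  | (k+1) => exact add_nonneg (mul_nonneg h1p (hq _)) (mul_nonneg hp0.le (hq _))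

lemma le_stp₁ (hp0 : 0 < p) (hp1 : p < 1) (hq : ∀ i, 0 ≤ q i) (i : ℕ) :
    (1-p) * q i ≤ stp p q i := by
  match i with
  | 0 => exact le_refl _
  | (k+1) =>
    have := mul_nonneg hp0.le (hq k)
    simp only [stp_succ]; linarith

lemma le_stp₂ (hp0 : 0 < p) (hp1 : p < 1) (hq : ∀ i, 0 ≤ q i) (i : ℕ) :
    p * q i ≤ stp p q (i+1) := by
  have h1p : (0:ℝ) ≤ 1 - p := by linarith
  have := mul_nonneg h1p (hq (i+1))
  simp only [stp_succ]; linarith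

lemma stp_supp (hsupp : ∀ i, N ≤ i → q i = 0) : ∀ i, N+1 ≤ i → stp p q i = 0 := by
  intro i hi
  match i, hi with
  | (k+1), hi =>
    have h1 : q (k+1) = 0 := hsupp _ (by omega)
    have h2 : q k = 0 := hsupp _ (by omega)
    simp [h1, h2]

lemma stp_sum (hsupp : ∀ i, N ≤ i → q i = 0) :
    ∑ i ∈ Finset.range (N+1), stp p q i = ∑ i ∈ Finset.range N, q i := by
  rw [Finset.sum_range_succ']
  simp only [stp_succ, stp_zero]
  rw [Finset.sum_add_distrib]
  have e1 : ∑ k ∈ Finset.range N, (1-p) * q (k+1) + (1-p) * q 0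
      = ∑ k ∈ Finset.range (N+1), (1-p) * q k := (Finset.sum_range_succ' (fun k => (1-p) * q k) N).symm
  have e2 : ∑ k ∈ Finset.range (N+1), (1-p) * q k = ∑ k ∈ Finset.range N, (1-p) * q k := by
    rw [Finset.sum_range_succ, hsupp N le_rfl, mul_zero, add_zero]
  have e3 : ∑ k ∈ Finset.range N, (1-p) * q k + ∑ k ∈ Finset.range N, p * q k
      = ∑ k ∈ Finset.range N, q k := by
    rw [← Finset.sum_add_distrib]
    apply Finset.sum_congr rfl
    intro k _; ring
  linarith [e1, e2, e3]
end

section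
variable {p : ℝ} {q : ℕ → ℝ} {N : ℕ}

lemma entropy_step (hp0 : 0 < p) (hp1 : p < 1) (hq : ∀ i, 0 ≤ q i)
    (hsupp : ∀ i, N ≤ i → q i = 0) (hsum : ∑ i ∈ Finset.range N, q i = 1) :
    ent (stp p q) (N+1) - ent q N
      = -(p * Real.log p + (1-p) * Real.log (1-p)) - Gf p q N := by
  have h1p : (0:ℝ) < 1 - p := by linarith
  -- S1 : entropy sum of stp
  have hS1 : ∑ j ∈ Finset.range (N+1), stp p q j * Real.log (stp p q j)
      = ∑ k ∈ Finset.range N,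
        ((1-p) * q k * Real.log (stp p q k) + p * q k * Real.log (stp p q (k+1))) := by
    rw [Finset.sum_range_succ' (fun j => stp p q j * Real.log (stp p q j)) N]
    have e1 : ∀ k ∈ Finset.range N, stp p q (k+1) * Real.log (stp p q (k+1))
        = (1-p) * q (k+1) * Real.log (stp p q (k+1)) + p * q k * Real.log (stp p q (k+1)) := by
      intro k _; rw [stp_succ]; ring
    rw [Finset.sum_congr rfl e1, Finset.sum_add_distrib]
    have e2 : ∑ k ∈ Finset.range N, (1-p) * q (k+1) * Real.log (stp p q (k+1))
        + stp p q 0 * Real.log (stp p q 0)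
        = ∑ k ∈ Finset.range (N+1), (1-p) * q k * Real.log (stp p q k) := by
      rw [Finset.sum_range_succ' (fun k => (1-p) * q k * Real.log (stp p q k)) N]
      simp only [stp_zero]
    have e3 : ∑ k ∈ Finset.range (N+1), (1-p) * q k * Real.log (stp p q k)
        = ∑ k ∈ Finset.range N, (1-p) * q k * Real.log (stp p q k) := by
      rw [Finset.sum_range_succ, hsupp N le_rfl]; simp
    rw [add_assoc, add_comm (∑ k ∈ Finset.range N, p * q k * Real.log (stp p q (k+1)))]
    rw [← add_assoc, e2, e3, ← Finset.sum_add_distrib]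
  -- pointwise expansion of Ff
  have hpt : ∀ k ∈ Finset.range N, Ff p q k
      = ((1-p) * q k * Real.log (stp p q k) + p * q k * Real.log (stp p q (k+1)))
        - q k * Real.log (q k) - q k * ((1-p) * Real.log (1-p) + p * Real.log p) := by
    intro k _
    rcases eq_or_lt_of_le (hq k) with h | h
    · simp [Ff, ← h]
    · have hs1 : 0 < stp p q k := lt_of_lt_of_le (by positivity) (le_stp₁ hp0 hp1 hq k)
      have hs2 : 0 < stp p q (k+1) := lt_of_lt_of_le (by positivity) (le_stp₂ hp0 hp1 hq k)
      rw [Ff, Real.log_div (ne_of_gt hs1) (by positivity),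
          Real.log_div (ne_of_gt hs2) (by positivity),
          Real.log_mul (ne_of_gt h1p) (ne_of_gt h),
          Real.log_mul (ne_of_gt hp0) (ne_of_gt h)]
      ring
  have hG : Gf p q N
      = (∑ k ∈ Finset.range N, ((1-p) * q k * Real.log (stp p q k) + p * q k * Real.log (stp p q (k+1))))
        - (∑ k ∈ Finset.range N, q k * Real.log (q k))
        - ((1-p) * Real.log (1-p) + p * Real.log p) := by
    rw [Gf, Finset.sum_congr rfl hpt]
    rw [Finset.sum_sub_distrib, Finset.sum_sub_distrib, ← Finset.sum_mul, hsum, one_mul]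
  rw [ent, ent, hS1, hG]
  ring
end

section
variable {p : ℝ} {q : ℕ → ℝ} {N : ℕ}

lemma Ff_zero {k : ℕ} (hqk : q k = 0) : Ff p q k = 0 := by simp [Ff, hqk]

lemma Ff_step (hp0 : 0 < p) (hp1 : p < 1) (hq : ∀ i, 0 ≤ q i) (k : ℕ) :
    (1-p) * Ff p q (k+1) + p * Ff p q k ≤ Ff p (stp p q) (k+1) := by
  have h1p : (0:ℝ) < 1 - p := by linarith
  have hs := stp_nonneg hp0 hp1 hq
  have hA : ∀ x:ℝ, 0 ≤ x → 0 ≤ (1-p) * x := fun x hx => mul_nonneg h1p.le hx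
  have hB : ∀ x:ℝ, 0 ≤ x → 0 ≤ p * x := fun x hx => mul_nonneg hp0.le hx
  have hT1 : (1-p) * ((1-p) * q (k+1)) * Real.log (stp p q (k+1) / ((1-p) * q (k+1)))
      + p * ((1-p) * q k) * Real.log (stp p q k / ((1-p) * q k))
      ≤ (1-p) * stp p q (k+1) * Real.log (stp p (stp p q) (k+1) / ((1-p) * stp p q (k+1))) := by
    have h := logsum2 ((1-p) * ((1-p) * q (k+1))) (p * ((1-p) * q k))
      ((1-p) * stp p q (k+1)) (p * stp p q k)
      (hA _ (hA _ (hq _))) (hB _ (hA _ (hq _))) (hA _ (hs _)) (hB _ (hs _))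
      (fun ha => by
        have hq1 : 0 < q (k+1) := by
          rcases eq_or_lt_of_le (hq (k+1)) with h | h
          · exact absurd (by rw [← h]; ring) ha
          · exact h
        have hsp : 0 < stp p q (k+1) :=
          lt_of_lt_of_le (mul_pos h1p hq1) (le_stp₁ hp0 hp1 hq (k+1))
        exact ne_of_gt (mul_pos h1p hsp))
      (fun ha => by
        have hq1 : 0 < q k := by
          rcases eq_or_lt_of_le (hq k) with h | h
          · exact absurd (by rw [← h]; ring) ha
          · exact h
        have hsp : 0 < stp p q k :=
          lt_of_lt_of_le (mul_pos h1p hq1) (le_stp₁ hp0 hp1 hq k)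
        exact ne_of_gt (mul_pos hp0 hsp))
    rw [mul_div_mul_left (stp p q (k+1)) ((1-p) * q (k+1)) (ne_of_gt h1p),
        mul_div_mul_left (stp p q k) ((1-p) * q k) (ne_of_gt hp0)] at h
    have e1 : (1-p) * ((1-p) * q (k+1)) + p * ((1-p) * q k) = (1-p) * stp p q (k+1) := by
      rw [stp_succ]; ring
    have e2 : (1-p) * stp p q (k+1) + p * stp p q k = stp p (stp p q) (k+1) :=
      (stp_succ p (stp p q) k).symm
    rw [e1, e2] at h
    exact h
  have hT2 : (1-p) * (p * q (k+1)) * Real.log (stp p q (k+2) / (p * q (k+1)))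
      + p * (p * q k) * Real.log (stp p q (k+1) / (p * q k))
      ≤ p * stp p q (k+1) * Real.log (stp p (stp p q) (k+2) / (p * stp p q (k+1))) := by
    have h := logsum2 ((1-p) * (p * q (k+1))) (p * (p * q k))
      ((1-p) * stp p q (k+2)) (p * stp p q (k+1))
      (hA _ (hB _ (hq _))) (hB _ (hB _ (hq _))) (hA _ (hs _)) (hB _ (hs _))
      (fun ha => by
        have hq1 : 0 < q (k+1) := by
          rcases eq_or_lt_of_le (hq (k+1)) with h | h
          · exact absurd (by rw [← h]; ring) ha
          · exact h
        have hsp : 0 < stp p q (k+2) :=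
          lt_of_lt_of_le (mul_pos hp0 hq1) (le_stp₂ hp0 hp1 hq (k+1))
        exact ne_of_gt (mul_pos h1p hsp))
      (fun ha => by
        have hq1 : 0 < q k := by
          rcases eq_or_lt_of_le (hq k) with h | h
          · exact absurd (by rw [← h]; ring) ha
          · exact h
        have hsp : 0 < stp p q (k+1) :=
          lt_of_lt_of_le (mul_pos hp0 hq1) (le_stp₂ hp0 hp1 hq k)
        exact ne_of_gt (mul_pos hp0 hsp))
    rw [mul_div_mul_left (stp p q (k+2)) (p * q (k+1)) (ne_of_gt h1p),
        mul_div_mul_left (stp p q (k+1)) (p * q k) (ne_of_gt hp0)] at h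
    have e1 : (1-p) * (p * q (k+1)) + p * (p * q k) = p * stp p q (k+1) := by
      rw [stp_succ]; ring
    have e2 : (1-p) * stp p q (k+2) + p * stp p q (k+1) = stp p (stp p q) (k+2) :=
      (stp_succ p (stp p q) (k+1)).symm
    rw [e1, e2] at h
    exact h
  calc (1-p) * Ff p q (k+1) + p * Ff p q k
      = ((1-p) * ((1-p) * q (k+1)) * Real.log (stp p q (k+1) / ((1-p) * q (k+1)))
          + p * ((1-p) * q k) * Real.log (stp p q k / ((1-p) * q k)))
        + ((1-p) * (p * q (k+1)) * Real.log (stp p q (k+2) / (p * q (k+1)))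
          + p * (p * q k) * Real.log (stp p q (k+1) / (p * q k))) := by
        simp only [Ff]; ring
    _ ≤ (1-p) * stp p q (k+1) * Real.log (stp p (stp p q) (k+1) / ((1-p) * stp p q (k+1)))
        + p * stp p q (k+1) * Real.log (stp p (stp p q) (k+2) / (p * stp p q (k+1))) :=
        add_le_add hT1 hT2
    _ = Ff p (stp p q) (k+1) := by simp only [Ff]
end

lemma self_log_self_div (y : ℝ) : y * Real.log (y / y) = 0 := by
  rcases eq_or_ne y 0 with h | h
  · simp [h]
  · rw [div_self h, Real.log_one, mul_zero]

section
variable {p : ℝ} {q : ℕ → ℝ} {N : ℕ}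

lemma Ff_step0 (hp0 : 0 < p) (hp1 : p < 1) (hq : ∀ i, 0 ≤ q i) :
    (1-p) * Ff p q 0 ≤ Ff p (stp p q) 0 := by
  have h1p : (0:ℝ) < 1 - p := by linarith
  have hs := stp_nonneg hp0 hp1 hq
  have h := logsum2 ((1-p) * (p * q 0)) 0 ((1-p) * stp p q 1) (p * stp p q 0)
    (mul_nonneg h1p.le (mul_nonneg hp0.le (hq 0))) le_rfl
    (mul_nonneg h1p.le (hs 1)) (mul_nonneg hp0.le (hs 0))
    (fun ha => by
      have hq1 : 0 < q 0 := by
        rcases eq_or_lt_of_le (hq 0) with h | h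
        · exact absurd (by rw [← h]; ring) ha
        · exact h
      have hsp : 0 < stp p q 1 :=
        lt_of_lt_of_le (mul_pos hp0 hq1) (le_stp₂ hp0 hp1 hq 0)
      exact ne_of_gt (mul_pos h1p hsp))
    (fun ha => absurd rfl ha)
  rw [mul_div_mul_left (stp p q 1) (p * q 0) (ne_of_gt h1p)] at h
  simp only [zero_mul, add_zero] at h
  have e1 : (1-p) * (p * q 0) = p * stp p q 0 := by rw [stp_zero]; ring
  have e2 : (1-p) * stp p q 1 + p * stp p q 0 = stp p (stp p q) 1 :=
    (stp_succ p (stp p q) 0).symm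
  rw [e1, e2] at h
  have t1 : (1-p) * Ff p q 0 = p * stp p q 0 * Real.log (stp p q 1 / (p * q 0)) := by
    simp only [Ff, stp_zero]
    rw [self_log_self_div ((1-p) * q 0)]
    ring
  have t2 : Ff p (stp p q) 0 = p * stp p q 0 * Real.log (stp p (stp p q) 1 / (p * stp p q 0)) := by
    simp only [Ff, stp_zero]
    rw [self_log_self_div ((1-p) * ((1-p) * q 0))]
    norm_num
  rw [t1, t2]
  exact h

lemma Gf_mono (hp0 : 0 < p) (hp1 : p < 1) (hq : ∀ i, 0 ≤ q i)
    (hsupp : ∀ i, N ≤ i → q i = 0) :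
    Gf p q N ≤ Gf p (stp p q) (N+1) := by
  have hFN : Ff p q N = 0 := Ff_zero (hsupp N le_rfl)
  have e : ∑ k ∈ Finset.range N, Ff p q (k+1) = Gf p q N - Ff p q 0 := by
    have h4 : ∑ j ∈ Finset.range (N+1), Ff p q j
        = ∑ k ∈ Finset.range N, Ff p q (k+1) + Ff p q 0 := Finset.sum_range_succ' _ N
    have h5 : ∑ j ∈ Finset.range (N+1), Ff p q j = Gf p q N := by
      rw [Finset.sum_range_succ, hFN, add_zero, Gf]
    linarith
  have hsum : ∑ k ∈ Finset.range N, ((1-p) * Ff p q (k+1) + p * Ff p q k)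
      = Gf p q N - (1-p) * Ff p q 0 := by
    rw [Finset.sum_add_distrib, ← Finset.mul_sum, ← Finset.mul_sum, e]
    have : ∑ k ∈ Finset.range N, Ff p q k = Gf p q N := by rw [Gf]
    rw [this]; ring
  have h2 := Finset.sum_le_sum (fun k (_ : k ∈ Finset.range N) => Ff_step hp0 hp1 hq k)
  rw [hsum] at h2
  have h0 := Ff_step0 hp0 hp1 hq (q := q)
  have h1 : Gf p (stp p q) (N+1)
      = ∑ k ∈ Finset.range N, Ff p (stp p q) (k+1) + Ff p (stp p q) 0 := by
    rw [Gf, Finset.sum_range_succ']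
  linarith

lemma ent_concave (hp0 : 0 < p) (hp1 : p < 1) (hq : ∀ i, 0 ≤ q i)
    (hsupp : ∀ i, N ≤ i → q i = 0) (hsum : ∑ i ∈ Finset.range N, q i = 1) :
    ent (stp p (stp p q)) (N+2) - ent (stp p q) (N+1)
      ≤ ent (stp p q) (N+1) - ent q N := by
  have hq' : ∀ i, 0 ≤ stp p q i := stp_nonneg hp0 hp1 hq
  have hsupp' : ∀ i, N+1 ≤ i → stp p q i = 0 := stp_supp hsupp
  have hsum' : ∑ i ∈ Finset.range (N+1), stp p q i = 1 := by
    rw [stp_sum hsupp, hsum]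
  have hA := entropy_step hp0 hp1 hq hsupp hsum
  have hB := entropy_step hp0 hp1 hq' hsupp' hsum'
  have hC := Gf_mono hp0 hp1 hq hsupp
  linarith
end

lemma binPMF_succ (ℓ : ℕ) (p : ℝ) : binPMF (ℓ+1) p = stp p (binPMF ℓ p) := by
  funext i
  match i with
  | 0 => simp [binPMF, stp_zero]; ring
  | (k+1) =>
    simp only [binPMF, stp_succ]
    rcases lt_or_ge k ℓ with h | h
    · have h1 : ℓ + 1 - (k+1) = ℓ - k := by omega
      have h2 : ℓ - k = (ℓ - (k+1)) + 1 := by omega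
      rw [h1, h2, Nat.choose_succ_succ, pow_succ]
      push_cast
      ring
    · have h1 : Nat.choose ℓ (k+1) = 0 := Nat.choose_eq_zero_of_lt (by omega)
      have h2 : ℓ + 1 - (k+1) = ℓ - k := by omega
      rw [Nat.choose_succ_succ, h1, h2]
      push_cast
      ring

lemma binPMF_nonneg {p : ℝ} (hp0 : 0 < p) (hp1 : p < 1) (ℓ i : ℕ) :
    0 ≤ binPMF ℓ p i := by
  have h1p : (0:ℝ) ≤ 1 - p := by linarith
  exact mul_nonneg (mul_nonneg (Nat.cast_nonneg _) (pow_nonneg hp0.le _)) (pow_nonneg h1p _)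

lemma binPMF_supp (ℓ : ℕ) (p : ℝ) : ∀ i, ℓ + 1 ≤ i → binPMF ℓ p i = 0 := by
  intro i hi
  have : Nat.choose ℓ i = 0 := Nat.choose_eq_zero_of_lt (by omega)
  simp [binPMF, this]

lemma binPMF_sum (ℓ : ℕ) (p : ℝ) :
    ∑ i ∈ Finset.range (ℓ+1), binPMF ℓ p i = 1 := by
  have h : (p + (1-p))^ℓ = ∑ k ∈ Finset.range (ℓ+1), p^k * (1-p)^(ℓ-k) * (Nat.choose ℓ k : ℝ) :=
    add_pow p (1-p) ℓ
  rw [show p + (1-p) = (1:ℝ) by ring, one_pow] at h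
  rw [h]
  apply Finset.sum_congr rfl
  intro i _
  rw [binPMF]
  ring

lemma bH_step {p : ℝ} (hp0 : 0 < p) (hp1 : p < 1) (n : ℕ) :
    ent (binPMF (n+2) p) (n+3) - ent (binPMF (n+1) p) (n+2)
      ≤ ent (binPMF (n+1) p) (n+2) - ent (binPMF n p) (n+1) := by
  have h := ent_concave (q := binPMF n p) (N := n+1) hp0 hp1
    (binPMF_nonneg hp0 hp1 n) (binPMF_supp n p) (binPMF_sum n p)
  rw [← binPMF_succ n p, ← binPMF_succ (n+1) p] at h
  exact h

lemma bH_chain {p : ℝ} (hp0 : 0 < p) (hp1 : p < 1) (d n : ℕ) :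
    ent (binPMF (n+1+d) p) (n+1+d+1) - ent (binPMF (n+d) p) (n+d+1)
      ≤ ent (binPMF (n+1) p) (n+1+1) - ent (binPMF n p) (n+1) := by
  induction d with
  | zero => simp
  | succ d ih =>
    have hstep := bH_step hp0 hp1 (n+d)
    have e1 : n+1+(d+1) = n+d+2 := by omega
    have e2 : n+(d+1) = n+d+1 := by omega
    have e5 : n+1+d = n+d+1 := by omega
    have e6 : n+1+d+1 = n+d+2 := by omega
    rw [e1, e2, show n+d+2+1 = n+d+3 from by omega, show n+d+1+1 = n+d+2 from by omega]
    rw [e5, show n+d+1+1 = n+d+2 from by omega] at ih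
    linarith [hstep]

/-- The entropy increments of binomial distributions are nonincreasing in `ℓ`. -/
theorem stmt18 (ℓ₁ ℓ₂ : ℕ) (p : ℝ) (h1 : 1 ≤ ℓ₁) (h12 : ℓ₁ ≤ ℓ₂)
    (hp0 : 0 < p) (hp1 : p < 1) :
    binH ℓ₂ p - binH (ℓ₂ - 1) p ≤ binH ℓ₁ p - binH (ℓ₁ - 1) p := by
  have hlog2 : 0 < Real.log 2 := Real.log_pos (by norm_num)
  have hbinH : ∀ ℓ : ℕ, binH ℓ p = ent (binPMF ℓ p) (ℓ+1) / Real.log 2 := by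
    intro ℓ
    rw [binH, ent, neg_div, Finset.sum_div, neg_inj]
    apply Finset.sum_congr rfl
    intro i _
    rw [Real.logb]
    ring
  obtain ⟨n, rfl⟩ : ∃ n, ℓ₁ = n + 1 := ⟨ℓ₁ - 1, by omega⟩
  obtain ⟨d, rfl⟩ : ∃ d, ℓ₂ = n + 1 + d := ⟨ℓ₂ - (n+1), by omega⟩
  have key := bH_chain hp0 hp1 d n
  have e1 : n + 1 + d - 1 = n + d := by omega
  have e2 : n + 1 - 1 = n := by omega
  rw [e1, e2, hbinH, hbinH, hbinH, hbinH, div_sub_div_same, div_sub_div_same]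
  exact (div_le_div_iff_of_pos_right hlog2).mpr key
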